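/- Let X₁, X₂ and Y be Banach spaces, let X = X₁ ⊕_∞ X₂, and let T : X → Y be a bounded linear operator with restrictions T₁ and T₂. If T₁ and T₂ are narrow operators, then T is a narrow operator. -/

import Mathlib

open Set

/-- A bounded linear operator `T : X → Y` is *narrow* if for every `x, y` in the unit
sphere of `X`, every continuous linear functional `f` on `X` and every `ε > 0` there is
`z` in the unit sphere with `‖x + z‖ ≥ 2 - ε` and `‖T (y - z)‖ + |f (y - z)| ≤ ε`. -/
def IsNarrow {X Y : Type*} [NormedAddCommGroup X] [NormedSpace ℝ X]
    [NormedAddCommGroup Y] [NormedSpace ℝ Y] (T : X →L[ℝ] Y) : Prop :=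
  ∀ x y : X, ‖x‖ = 1 → ‖y‖ = 1 → ∀ f : X →L[ℝ] ℝ, ∀ ε : ℝ, 0 < ε →
    ∃ z : X, ‖z‖ = 1 ∧ 2 - ε ≤ ‖x + z‖ ∧ ‖T (y - z)‖ + |f (y - z)| ≤ ε

lemma exists_sphere_decomp {X : Type*} [NormedAddCommGroup X] [NormedSpace ℝ X]
    (x y : X) (hx : ‖x‖ = 1) (hy : ‖y‖ ≤ 1) :
    ∃ (s : ℝ) (u v : X), 0 ≤ s ∧ s ≤ 1 ∧ ‖u‖ = 1 ∧ ‖v‖ = 1 ∧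
      y = s • u + (1 - s) • v := by
  have hc : ∀ c : ℝ, ContinuousOn (fun t : ℝ => ‖y + (c * t) • x‖) (Icc 0 2) := by
    intro c
    exact (Continuous.norm (by continuity)).continuousOn
  have key : ∀ c : ℝ, ‖c‖ = 1 → ∃ t ∈ Icc (0:ℝ) 2, ‖y + (c * t) • x‖ = 1 := by
    intro c hcn
    have h0 : ‖y + (c * 0) • x‖ ≤ 1 := by simpa using hy
    have h2 : 1 ≤ ‖y + (c * 2) • x‖ := by
      have h1 : ‖(c * 2) • x‖ = 2 := by
        rw [norm_smul, hx]; simp [norm_mul, hcn]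
      have := norm_sub_norm_le ((c * 2) • x) (-(y))
      simp only [sub_neg_eq_add, norm_neg] at this
      have h3 : ‖(c*2) • x + y‖ = ‖y + (c*2) • x‖ := by rw [add_comm]
      linarith [this, h1.ge, hy]
    have hsub := intermediate_value_Icc (by norm_num : (0:ℝ) ≤ 2) (hc c)
    have : (1:ℝ) ∈ Icc (‖y + (c * 0) • x‖) (‖y + (c * 2) • x‖) := ⟨h0, h2⟩
    obtain ⟨t, ht, htv⟩ := hsub this
    exact ⟨t, ht, htv⟩
  obtain ⟨t₁, ht₁m, ht₁⟩ := key 1 (by norm_num)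
  obtain ⟨t₂, ht₂m, ht₂⟩ := key (-1) (by norm_num)
  simp only [one_mul, neg_one_mul, neg_smul] at ht₁ ht₂
  by_cases h : t₁ + t₂ = 0
  · have h1 : t₁ = 0 := by cases ht₁m; cases ht₂m; linarith
    refine ⟨1, y, x, by norm_num, le_refl 1, ?_, hx, by simp⟩
    simpa [h1] using ht₁
  · have hS : 0 < t₁ + t₂ := lt_of_le_of_ne (by cases ht₁m; cases ht₂m; linarith) (Ne.symm h)
    have ht₂' : ‖y - t₂ • x‖ = 1 := by rw [sub_eq_add_neg]; exact ht₂
    refine ⟨t₂ / (t₁ + t₂), y + t₁ • x, y - t₂ • x, ?_, ?_, ht₁, ht₂', ?_⟩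
    · exact div_nonneg ht₂m.1 hS.le
    · rw [div_le_one hS]; linarith [ht₁m.1]
    · match_scalars <;> field_simp <;> ring

lemma isNarrow_ball {X Y : Type*} [NormedAddCommGroup X] [NormedSpace ℝ X]
    [NormedAddCommGroup Y] [NormedSpace ℝ Y] (T : X →L[ℝ] Y) (hT : IsNarrow T)
    (x y : X) (hx : ‖x‖ = 1) (hy : ‖y‖ ≤ 1) (f : X →L[ℝ] ℝ) (ε : ℝ) (hε : 0 < ε) :
    ∃ z : X, ‖z‖ ≤ 1 ∧ 2 - ε ≤ ‖x + z‖ ∧ ‖T (y - z)‖ + |f (y - z)| ≤ ε := by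
  obtain ⟨δ, hδ0, hδh, hδε3⟩ : ∃ δ : ℝ, 0 < δ ∧ δ ≤ 1 / 2 ∧ δ ≤ ε / 3 :=
    ⟨min (ε / 3) (1 / 2), lt_min (by linarith) (by norm_num), min_le_right _ _,
      min_le_left _ _⟩
  obtain ⟨s, u, v, hs0, hs1, hu, hv, hyd⟩ := exists_sphere_decomp x y hx hy
  obtain ⟨w₂, hw₂n, hw₂x, hw₂p⟩ := hT x v hx hv f δ hδ0
  obtain ⟨q, hqdef⟩ : ∃ q : X, q = x + (1 - s) • w₂ := ⟨_, rfl⟩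
  have hqlb : 2 - δ - s ≤ ‖q‖ := by
    have hq1 : q = (x + w₂) - s • w₂ := by rw [hqdef]; module
    have := norm_sub_norm_le (x + w₂) (s • w₂)
    rw [← hq1] at this
    have hsm : ‖s • w₂‖ = s := by
      rw [norm_smul, hw₂n, mul_one, Real.norm_eq_abs, abs_of_nonneg hs0]
    linarith [hw₂x]
  have hqpos : q ≠ 0 := by
    intro h0
    rw [h0, norm_zero] at hqlb
    linarith
  obtain ⟨x', hx'def⟩ : ∃ x' : X, x' = ‖q‖⁻¹ • q := ⟨_, rfl⟩
  have hx' : ‖x'‖ = 1 := by rw [hx'def]; exact norm_smul_inv_norm hqpos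
  obtain ⟨w₁, hw₁n, hw₁x, hw₁p⟩ := hT x' u hx' hu f δ hδ0
  have hne : x' + w₁ ≠ 0 := by
    intro h0
    rw [h0, norm_zero] at hw₁x
    linarith
  obtain ⟨g, hg, hgx⟩ := exists_dual_vector ℝ (x' + w₁) (norm_ne_zero_iff.mpr hne)
  have hgle : ∀ w : X, g w ≤ ‖w‖ := by
    intro w
    calc g w ≤ |g w| := le_abs_self _
      _ = ‖g w‖ := rfl
      _ ≤ ‖g‖ * ‖w‖ := g.le_opNorm w
      _ = ‖w‖ := by rw [hg, one_mul]
  have hgsum : 2 - δ ≤ g (x' + w₁) := by rw [hgx]; exact_mod_cast hw₁x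
  have hgx' : 1 - δ ≤ g x' := by
    have := hgle w₁
    rw [map_add] at hgsum
    rw [hw₁n] at this
    linarith
  have hgw₁ : 1 - δ ≤ g w₁ := by
    have := hgle x'
    rw [map_add] at hgsum
    rw [hx'] at this
    linarith
  refine ⟨s • w₁ + (1 - s) • w₂, ?_, ?_, ?_⟩
  · calc ‖s • w₁ + (1 - s) • w₂‖ ≤ ‖s • w₁‖ + ‖(1 - s) • w₂‖ := norm_add_le _ _
      _ = s * 1 + (1 - s) * 1 := by
          rw [norm_smul, norm_smul, hw₁n, hw₂n, Real.norm_eq_abs, Real.norm_eq_abs,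
            abs_of_nonneg hs0, abs_of_nonneg (by linarith : (0:ℝ) ≤ 1 - s)]
      _ = 1 := by ring
  · have hq' : (‖q‖ : ℝ) • x' = q := by
      rw [hx'def, smul_smul, mul_inv_cancel₀ (norm_ne_zero_iff.mpr hqpos), one_smul]
    have hxz : x + (s • w₁ + (1 - s) • w₂) = q + s • w₁ := by
      rw [hqdef]; module
    have hgq : g q = ‖q‖ * g x' := by
      conv_lhs => rw [← hq']
      rw [map_smul, smul_eq_mul]
    have hsw : g (s • w₁) = s * g w₁ := by rw [map_smul, smul_eq_mul]
    have hgval : g (x + (s • w₁ + (1 - s) • w₂)) = ‖q‖ * g x' + s * g w₁ := by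
      rw [hxz, map_add, hgq, hsw]
    have hgoal : 2 - ε ≤ g (x + (s • w₁ + (1 - s) • w₂)) := by
      rw [hgval]
      have h1 : (2 - δ - s) * (1 - δ) ≤ ‖q‖ * g x' := by
        have hb : (0:ℝ) ≤ 1 - δ := by linarith
        have hc : (0:ℝ) ≤ 2 - δ - s := by linarith
        nlinarith [hgx', hqlb]
      have h2 : s * (1 - δ) ≤ s * g w₁ := mul_le_mul_of_nonneg_left hgw₁ hs0
      have h3 : 2 - ε ≤ (2 - δ - s) * (1 - δ) + s * (1 - δ) := by nlinarith [sq_nonneg δ]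
      linarith
    calc 2 - ε ≤ g (x + (s • w₁ + (1 - s) • w₂)) := hgoal
      _ ≤ ‖x + (s • w₁ + (1 - s) • w₂)‖ := hgle _
  · have hyz : y - (s • w₁ + (1 - s) • w₂) = s • (u - w₁) + (1 - s) • (v - w₂) := by
      rw [hyd]; module
    rw [hyz]
    have hTb : ‖T (s • (u - w₁) + (1 - s) • (v - w₂))‖
        ≤ s * ‖T (u - w₁)‖ + (1 - s) * ‖T (v - w₂)‖ := by
      calc ‖T (s • (u - w₁) + (1 - s) • (v - w₂))‖
          ≤ ‖T (s • (u - w₁))‖ + ‖T ((1 - s) • (v - w₂))‖ := by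
            rw [map_add]; exact norm_add_le _ _
        _ = s * ‖T (u - w₁)‖ + (1 - s) * ‖T (v - w₂)‖ := by
            rw [map_smul, map_smul, norm_smul, norm_smul, Real.norm_eq_abs, Real.norm_eq_abs,
              abs_of_nonneg hs0, abs_of_nonneg (by linarith : (0:ℝ) ≤ 1 - s)]
    have hfb : |f (s • (u - w₁) + (1 - s) • (v - w₂))|
        ≤ s * |f (u - w₁)| + (1 - s) * |f (v - w₂)| := by
      calc |f (s • (u - w₁) + (1 - s) • (v - w₂))|
          ≤ |f (s • (u - w₁))| + |f ((1 - s) • (v - w₂))| := by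
            rw [map_add]; exact abs_add_le _ _
        _ = s * |f (u - w₁)| + (1 - s) * |f (v - w₂)| := by
            rw [map_smul, map_smul, smul_eq_mul, smul_eq_mul, abs_mul, abs_mul,
              abs_of_nonneg hs0, abs_of_nonneg (by linarith : (0:ℝ) ≤ 1 - s)]
    have h5 : s * (‖T (u - w₁)‖ + |f (u - w₁)|) ≤ s * δ :=
      mul_le_mul_of_nonneg_left hw₁p hs0
    have h6 : (1 - s) * (‖T (v - w₂)‖ + |f (v - w₂)|) ≤ (1 - s) * δ :=
      mul_le_mul_of_nonneg_left hw₂p (by linarith)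
    rw [mul_add] at h5 h6
    have h7 : s * δ + (1 - s) * δ = δ := by ring
    have hδε : δ ≤ ε := by linarith
    linarith [hTb, hfb]

theorem narrow_of_restrictions_inftySum
    {X₁ X₂ Y : Type*}
    [NormedAddCommGroup X₁] [NormedSpace ℝ X₁] [CompleteSpace X₁]
    [NormedAddCommGroup X₂] [NormedSpace ℝ X₂] [CompleteSpace X₂]
    [NormedAddCommGroup Y] [NormedSpace ℝ Y] [CompleteSpace Y]
    (T : WithLp ⊤ (X₁ × X₂) →L[ℝ] Y)
    (T₁ : X₁ →L[ℝ] Y) (T₂ : X₂ →L[ℝ] Y)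
    (hT₁ : ∀ x₁ : X₁, T₁ x₁ = T ((WithLp.prodContinuousLinearEquiv ⊤ ℝ X₁ X₂).symm (x₁, 0)))
    (hT₂ : ∀ x₂ : X₂, T₂ x₂ = T ((WithLp.prodContinuousLinearEquiv ⊤ ℝ X₁ X₂).symm (0, x₂)))
    (h₁ : IsNarrow T₁) (h₂ : IsNarrow T₂) :
    IsNarrow T := by
  intro x y hx hy f ε hε
  set e := WithLp.prodContinuousLinearEquiv ⊤ ℝ X₁ X₂ with he
  have hn : ∀ (a : X₁) (b : X₂), ‖(e.symm (a, b) : WithLp ⊤ (X₁ × X₂))‖ = max ‖a‖ ‖b‖ :=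
    fun a b => WithLp.prod_norm_eq_sup _
  have hT' : ∀ (a : X₁) (b : X₂), T (e.symm (a, b)) = T₁ a + T₂ b := by
    intro a b
    have hab : ((a, b) : X₁ × X₂) = ((a, (0:X₂)) + ((0:X₁), b)) := by simp
    rw [hab, map_add, map_add, hT₁, hT₂]
  -- the two restricted functionals
  set f₁ : X₁ →L[ℝ] ℝ :=
    f.comp ((e.symm : (X₁ × X₂) ≃L[ℝ] WithLp ⊤ (X₁ × X₂)).toContinuousLinearMap.comp
      (ContinuousLinearMap.inl ℝ X₁ X₂)) with hf₁def
  set f₂ : X₂ →L[ℝ] ℝ :=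
    f.comp ((e.symm : (X₁ × X₂) ≃L[ℝ] WithLp ⊤ (X₁ × X₂)).toContinuousLinearMap.comp
      (ContinuousLinearMap.inr ℝ X₁ X₂)) with hf₂def
  have hf₁ : ∀ a : X₁, f₁ a = f (e.symm (a, 0)) := by intro a; simp [hf₁def]
  have hf₂ : ∀ b : X₂, f₂ b = f (e.symm (0, b)) := by intro b; simp [hf₂def]
  have hf' : ∀ (a : X₁) (b : X₂), f (e.symm (a, b)) = f₁ a + f₂ b := by
    intro a b
    have hab : ((a, b) : X₁ × X₂) = ((a, (0:X₂)) + ((0:X₁), b)) := by simp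
    rw [hf₁, hf₂, hab, map_add, map_add]
  have hp : ∀ (a : X₁) (b : X₂), ‖T (e.symm (a, b))‖ + |f (e.symm (a, b))| ≤
      (‖T₁ a‖ + |f₁ a|) + (‖T₂ b‖ + |f₂ b|) := by
    intro a b
    rw [hT', hf']
    have h1 := norm_add_le (T₁ a) (T₂ b)
    have h2 := abs_add_le (f₁ a) (f₂ b)
    linarith
  -- components of x and y
  have hxc : x = e.symm (x.fst, x.snd) := rfl
  have hyc : y = e.symm (y.fst, y.snd) := rfl
  have hxn : max ‖x.fst‖ ‖x.snd‖ = 1 := by rw [← hn]; exact hx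
  have hyn : max ‖y.fst‖ ‖y.snd‖ = 1 := by rw [← hn]; exact hy
  have hx1le : ‖x.fst‖ ≤ 1 := hxn ▸ le_max_left _ _
  have hx2le : ‖x.snd‖ ≤ 1 := hxn ▸ le_max_right _ _
  have hy1le : ‖y.fst‖ ≤ 1 := hyn ▸ le_max_left _ _
  have hy2le : ‖y.snd‖ ≤ 1 := hyn ▸ le_max_right _ _
  -- assembling a witness from componentwise data
  have finish : ∀ (z₁ : X₁) (z₂ : X₂), max ‖z₁‖ ‖z₂‖ = 1 →
      (2 - ε ≤ ‖x.fst + z₁‖ ∨ 2 - ε ≤ ‖x.snd + z₂‖) →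
      (‖T₁ (y.fst - z₁)‖ + |f₁ (y.fst - z₁)|) + (‖T₂ (y.snd - z₂)‖ + |f₂ (y.snd - z₂)|) ≤ ε →
      ∃ z, ‖z‖ = 1 ∧ 2 - ε ≤ ‖x + z‖ ∧ ‖T (y - z)‖ + |f (y - z)| ≤ ε := by
    intro z₁ z₂ hzn hal hp2
    refine ⟨e.symm (z₁, z₂), ?_, ?_, ?_⟩
    · rw [hn]; exact hzn
    · have hxz : x + e.symm (z₁, z₂) = e.symm (x.fst + z₁, x.snd + z₂) := rfl
      rw [hxz, hn]
      rcases hal with h | h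
      · exact le_trans h (le_max_left _ _)
      · exact le_trans h (le_max_right _ _)
    · have hyz : y - e.symm (z₁, z₂) = e.symm (y.fst - z₁, y.snd - z₂) := rfl
      rw [hyz]
      exact le_trans (hp _ _) hp2
  by_cases hx1 : ‖x.fst‖ = 1
  · by_cases hy2 : ‖y.snd‖ = 1
    · -- x-action in coordinate 1, y mostly in coordinate 2
      obtain ⟨z₁, hz₁n, hz₁x, hz₁p⟩ :=
        isNarrow_ball T₁ h₁ x.fst y.fst hx1 hy1le f₁ (ε / 2) (by linarith)
      obtain ⟨z₂, hz₂n, _, hz₂p⟩ := h₂ y.snd y.snd hy2 hy2 f₂ (ε / 2) (by linarith)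
      refine finish z₁ z₂ ?_ (Or.inl (by linarith)) (by linarith)
      rw [hz₂n]; exact max_eq_right hz₁n
    · have hy1 : ‖y.fst‖ = 1 := by
        rcases max_choice ‖y.fst‖ ‖y.snd‖ with h | h
        · rw [h] at hyn; exact hyn
        · rw [h] at hyn; exact absurd hyn hy2
      obtain ⟨z₁, hz₁n, hz₁x, hz₁p⟩ := h₁ x.fst y.fst hx1 hy1 f₁ ε hε
      refine finish z₁ y.snd ?_ (Or.inl hz₁x) ?_
      · rw [hz₁n]; exact max_eq_left hy2le
      · simp only [sub_self, map_zero, norm_zero, abs_zero, add_zero]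
        linarith
  · have hx2 : ‖x.snd‖ = 1 := by
      rcases max_choice ‖x.fst‖ ‖x.snd‖ with h | h
      · rw [h] at hxn; exact absurd hxn hx1
      · rw [h] at hxn; exact hxn
    by_cases hy1 : ‖y.fst‖ = 1
    · obtain ⟨z₂, hz₂n, hz₂x, hz₂p⟩ :=
        isNarrow_ball T₂ h₂ x.snd y.snd hx2 hy2le f₂ (ε / 2) (by linarith)
      obtain ⟨z₁, hz₁n, _, hz₁p⟩ := h₁ y.fst y.fst hy1 hy1 f₁ (ε / 2) (by linarith)
      refine finish z₁ z₂ ?_ (Or.inr (by linarith)) (by linarith)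
      rw [hz₁n]; exact max_eq_left hz₂n
    · have hy2 : ‖y.snd‖ = 1 := by
        rcases max_choice ‖y.fst‖ ‖y.snd‖ with h | h
        · rw [h] at hyn; exact absurd hyn hy1
        · rw [h] at hyn; exact hyn
      obtain ⟨z₂, hz₂n, hz₂x, hz₂p⟩ := h₂ x.snd y.snd hx2 hy2 f₂ ε hε
      refine finish y.fst z₂ ?_ (Or.inr hz₂x) ?_
      · rw [hz₂n]; exact max_eq_right hy1le
      · simp only [sub_self, map_zero, norm_zero, abs_zero, zero_add]
        linarith
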